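/- Let k be an even positive integer and n a positive integer. If A is a finite set of distinct positive integers such that a·b + n is a perfect k-th power for all a, b ∈ A (including a = b), then |A| ≤ τ(n), the number of positive divisors of n; moreover every element of A is at most n. -/

import Mathlib

/-- strong Diophantine tuples with property `SD_k(n)` for even `k`
have size at most `τ(n)`, and all elements are at most `n`. -/
theorem strong_diophantine_even_k_divisor_bound
    (k n : ℕ) (hk : 0 < k) (hkeven : Even k) (hn : 0 < n)
    (A : Finset ℕ) (hpos : ∀ a ∈ A, 0 < a)
    (hprop : ∀ a ∈ A, ∀ b ∈ A, ∃ y : ℕ, a * b + n = y ^ k) :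
    A.card ≤ n.divisors.card ∧ ∀ a ∈ A, a ≤ n := by
  -- For each a ∈ A, there is d ≥ 1 with d * (d + 2a) = n, namely d = sqrt(a²+n) - a.
  have key : ∀ a ∈ A, ∃ d : ℕ, 0 < d ∧ d * (d + 2 * a) = n ∧
      Nat.sqrt (a * a + n) = a + d := by
    intro a ha
    obtain ⟨y, hy⟩ := hprop a ha a ha
    obtain ⟨m, hm⟩ := hkeven
    have hz : a * a + n = (y ^ m) * (y ^ m) := by
      rw [hy, hm, ← pow_add]
    have hlt : a < y ^ m := by
      by_contra h
      push_neg at h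
      nlinarith [Nat.mul_le_mul h h]
    refine ⟨y ^ m - a, by omega, ?_, ?_⟩
    · have : y ^ m = a + (y ^ m - a) := by omega
      nlinarith [hz, this]
    · have : Nat.sqrt (a * a + n) = y ^ m := by
        rw [hz, ← pow_two]; exact Nat.sqrt_eq' _
      omega
  have hle : ∀ a ∈ A, a ≤ n := by
    intro a ha
    obtain ⟨d, hd, hdn, -⟩ := key a ha
    nlinarith [hpos a ha]
  refine ⟨?_, hle⟩
  apply Finset.card_le_card_of_injOn (fun a => Nat.sqrt (a * a + n) - a)
  · intro a ha
    obtain ⟨d, hd, hdn, hs⟩ := key a ha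
    have : Nat.sqrt (a * a + n) - a = d := by omega
    simp only [Finset.mem_coe]
    rw [this, Nat.mem_divisors]
    exact ⟨⟨d + 2 * a, hdn.symm⟩, by omega⟩
  · intro a ha b hb hab
    obtain ⟨d, hd, hdn, hs⟩ := key a ha
    obtain ⟨e, he, hen, ht⟩ := key b hb
    simp only [hs, ht] at hab
    have hde : d = e := by omega
    subst hde
    nlinarith [hdn, hen]
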